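/- For κ = 5, with ⟨x⟩ = sin(πx/5)/sin(π/5) for real x, the following identities hold: ⟨1⟩·⟨3⟩ / (⟨1/2⟩·⟨3/2⟩) = √5 and ⟨5/2⟩·⟨3⟩ / (⟨1⟩·⟨3/2⟩) = 2. -/

import Mathlib

/-- The q-number at altitude `κ`: `⟨x⟩ = sin(πx/κ)/sin(π/κ)`. -/
noncomputable def qnum (κ x : ℝ) : ℝ := Real.sin (Real.pi * x / κ) / Real.sin (Real.pi / κ)

/-- Quantum dimensions of the two fundamental representations of B2 at level 2
(altitude κ = 5): the spinorial `{0,1}` has quantum dimension √5 and the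
vectorial `{1,0}` has quantum dimension 2. -/
theorem b2_level2_fundamental_qdims :
    qnum 5 1 * qnum 5 3 / (qnum 5 (1/2) * qnum 5 (3/2)) = Real.sqrt 5 ∧
    qnum 5 (5/2) * qnum 5 3 / (qnum 5 1 * qnum 5 (3/2)) = 2 := by
  have pi_pos := Real.pi_pos
  set s := Real.sin (Real.pi / 5) with hs_def
  set c := Real.cos (Real.pi / 5) with hc_def
  have hc : c = (1 + Real.sqrt 5) / 4 := Real.cos_pi_div_five
  have hsqrt5 : Real.sqrt 5 ^ 2 = 5 := Real.sq_sqrt (by norm_num)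
  have hsqrt5_pos : (1:ℝ) < Real.sqrt 5 := by
    nlinarith [Real.sqrt_nonneg 5]
  have hs_pos : 0 < s := Real.sin_pos_of_pos_of_lt_pi (by positivity) (by linarith)
  have hs_ne : s ≠ 0 := ne_of_gt hs_pos
  have hs2 : s ^ 2 = 1 - c ^ 2 := by
    have := Real.sin_sq_add_cos_sq (Real.pi / 5); linarith
  have h1 : Real.sin (Real.pi * 1 / 5) = s := by rw [hs_def]; ring_nf
  have h3 : Real.sin (Real.pi * 3 / 5) = 2 * s * c := by
    have : Real.pi * 3 / 5 = Real.pi - 2 * (Real.pi / 5) := by ring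
    rw [this, Real.sin_pi_sub, Real.sin_two_mul]
  have hhalf : Real.sin (Real.pi * (1/2) / 5) = 2 * c ^ 2 - 1 := by
    have : Real.pi * (1/2) / 5 = Real.pi / 2 - 2 * (Real.pi / 5) := by ring
    rw [this, Real.sin_pi_div_two_sub, Real.cos_two_mul]
  have h32 : Real.sin (Real.pi * (3/2) / 5) = c := by
    have : Real.pi * (3/2) / 5 = Real.pi / 2 - Real.pi / 5 := by ring
    rw [this, Real.sin_pi_div_two_sub]
  have h52 : Real.sin (Real.pi * (5/2) / 5) = 1 := by
    have : Real.pi * (5/2) / 5 = Real.pi / 2 := by ring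
    rw [this, Real.sin_pi_div_two]
  have hc_pos : 0 < c := by rw [hc]; positivity
  have hd_pos : 0 < 2 * c ^ 2 - 1 := by rw [hc]; nlinarith
  constructor
  · rw [qnum, qnum, qnum, qnum, h1, h3, hhalf, h32, ← hs_def]
    have hden : 0 < (2 * c ^ 2 - 1) / s * (c / s) :=
      mul_pos (div_pos hd_pos hs_pos) (div_pos hc_pos hs_pos)
    rw [div_eq_iff (ne_of_gt hden), div_self hs_ne]
    field_simp
    have hs2v : s ^ 2 = (10 - 2 * Real.sqrt 5) / 16 := by
      rw [hs2, hc]; linear_combination (-(1:ℝ)/16) * hsqrt5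
    have key : 2 * s ^ 2 = Real.sqrt 5 * (2 * c ^ 2 - 1) := by
      rw [hs2v, hc]; linear_combination (-(Real.sqrt 5 + 2)/8) * hsqrt5
    linear_combination key
  · rw [qnum, qnum, qnum, qnum, h52, h3, h1, h32, ← hs_def]
    field_simp
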